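/- Let γ denote the standard Gaussian measure on ℝ^d (density x ↦ (2π)^(−d/2)·exp(−‖x‖²/2) with respect to Lebesgue measure on EuclideanSpace ℝ (Fin d)). Then for every x ∈ ℝ^d and every r > 0, exp(−‖x‖²/2) · γ(B(0,r)) ≤ γ(B(x,r)) ≤ γ(B(0,r)), where B(y,r) denotes the Euclidean ball of center y and radius r. -/

import Mathlib

open MeasureTheory Real
open scoped ENNReal

/-- Standard Gaussian density on `ℝ^d`. -/
noncomputable def stdGaussianDensity (d : ℕ) (x : EuclideanSpace ℝ (Fin d)) : ℝ :=
  (2 * π) ^ (-(d : ℝ) / 2) * Real.exp (-‖x‖ ^ 2 / 2)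

/-- Standard Gaussian measure on `ℝ^d`: density `(2π)^{−d/2}·exp(−‖x‖²/2)` with
respect to Lebesgue measure. -/
noncomputable def stdGaussianMeasure (d : ℕ) : Measure (EuclideanSpace ℝ (Fin d)) :=
  volume.withDensity fun x => ENNReal.ofReal (stdGaussianDensity d x)

/-! ### One-dimensional lemmas -/

noncomputable def gpdf (t : ℝ) : ℝ := Real.exp (-t^2/2)
lemma gpdf_cont : Continuous gpdf := by unfold gpdf; continuity
lemma gpdf_pos (t : ℝ) : 0 < gpdf t := Real.exp_pos _

lemma oneD_lower (a s : ℝ) (ha : 0 ≤ a) (hs : 0 ≤ s) :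
    Real.exp (-a^2/2) * ∫ t in (-s)..s, gpdf t ≤ ∫ t in (a-s)..(a+s), gpdf t := by
  have h1 : ∫ t in (a-s)..(a+s), gpdf t = ∫ t in (-s)..s, gpdf (t + a) := by
    rw [intervalIntegral.integral_comp_add_right]; ring_nf
  have h2 : ∫ t in (a-s)..(a+s), gpdf t = ∫ t in (-s)..s, gpdf (-t + a) := by
    have := intervalIntegral.integral_comp_neg (a := -s) (b := s) (fun t => gpdf (t + a))
    simp only [neg_neg] at this
    rw [h1, ← this]
  have key : ∫ t in (a-s)..(a+s), gpdf t
      = ∫ t in (-s)..s, (gpdf (t + a) + gpdf (-t + a)) / 2 := by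
    rw [intervalIntegral.integral_div, intervalIntegral.integral_add, ← h1, ← h2]
    · ring
    · exact (gpdf_cont.comp (by continuity)).intervalIntegrable _ _
    · exact (gpdf_cont.comp (by continuity)).intervalIntegrable _ _
  rw [key, ← intervalIntegral.integral_const_mul]
  apply intervalIntegral.integral_mono_on (by linarith)
  · exact (continuous_const.mul gpdf_cont).intervalIntegrable _ _
  · exact (((gpdf_cont.comp (by continuity)).add
      (gpdf_cont.comp (by continuity))).div_const 2).intervalIntegrable _ _
  · intro t _
    have h5 : gpdf (t + a) + gpdf (-t + a)
        = 2 * (Real.exp (-a^2/2) * gpdf t * Real.cosh (a*t)) := by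
      unfold gpdf
      rw [Real.cosh_eq]
      have e1 : Real.exp (-(t+a)^2/2) = Real.exp (-a^2/2 + -t^2/2) * Real.exp (-(a*t)) := by
        rw [← Real.exp_add]; congr 1; ring
      have e2 : Real.exp (-(-t+a)^2/2) = Real.exp (-a^2/2 + -t^2/2) * Real.exp (a*t) := by
        rw [← Real.exp_add]; congr 1; ring
      rw [e1, e2, Real.exp_add]; ring
    rw [h5]
    have h3 := Real.one_le_cosh (a*t)
    have h4 : 0 < Real.exp (-a^2/2) * gpdf t := mul_pos (Real.exp_pos _) (gpdf_pos t)
    nlinarith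

noncomputable def gcdf (u : ℝ) : ℝ := ∫ t in (0:ℝ)..u, gpdf t

lemma gcdf_hasDerivAt (u : ℝ) : HasDerivAt gcdf (gpdf u) u :=
  (intervalIntegral.integral_hasStrictDerivAt_right
    (gpdf_cont.intervalIntegrable _ _) (gpdf_cont.stronglyMeasurableAtFilter _ _)
    gpdf_cont.continuousAt).hasDerivAt

lemma shiftInt_eq (a s : ℝ) : ∫ t in (a-s)..(a+s), gpdf t = gcdf (a+s) - gcdf (a-s) := by
  unfold gcdf
  rw [intervalIntegral.integral_interval_sub_left
    (gpdf_cont.intervalIntegrable _ _) (gpdf_cont.intervalIntegrable _ _)]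

lemma shiftFn_hasDerivAt (s b : ℝ) :
    HasDerivAt (fun a => gcdf (a+s) - gcdf (a-s)) (gpdf (b+s) * 1 - gpdf (b-s) * 1) b :=
  by
    have h1 := (gcdf_hasDerivAt (b+s)).comp b ((hasDerivAt_id b).add_const s)
    have h2 := (gcdf_hasDerivAt (b-s)).comp b ((hasDerivAt_id b).sub_const s)
    exact h1.sub h2

lemma oneD_upper (a s : ℝ) (ha : 0 ≤ a) (hs : 0 ≤ s) :
    ∫ t in (a-s)..(a+s), gpdf t ≤ ∫ t in (0-s)..(0+s), gpdf t := by
  have hmono : AntitoneOn (fun a => gcdf (a+s) - gcdf (a-s)) (Set.Ici 0) := by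
    apply antitoneOn_of_deriv_nonpos (convex_Ici 0)
    · exact Continuous.continuousOn (continuous_iff_continuousAt.2
        fun b => (shiftFn_hasDerivAt s b).differentiableAt.continuousAt)
    · intro b _
      exact (shiftFn_hasDerivAt s b).differentiableAt.differentiableWithinAt
    · intro b hb
      rw [interior_Ici] at hb
      rw [(shiftFn_hasDerivAt s b).deriv]
      have : (b-s)^2 ≤ (b+s)^2 := by nlinarith [(Set.mem_Ioi.mp hb).le]
      simp only [mul_one, sub_nonpos]
      unfold gpdf
      exact Real.exp_le_exp.2 (by linarith)
  rw [shiftInt_eq, shiftInt_eq]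
  exact hmono (Set.mem_Ici.2 le_rfl) (Set.mem_Ici.2 ha) ha

/-! ### lintegral versions over `Ioo` -/

lemma lint_Ioo (l u : ℝ) (h : l ≤ u) :
    ∫⁻ t in Set.Ioo l u, ENNReal.ofReal (gpdf t) = ENNReal.ofReal (∫ t in l..u, gpdf t) := by
  rw [← MeasureTheory.ofReal_integral_eq_lintegral_ofReal
    ((gpdf_cont.integrableOn_Icc).mono_set Set.Ioo_subset_Icc_self)
    (Filter.Eventually.of_forall fun t => (gpdf_pos t).le)]
  congr 1
  rw [intervalIntegral.integral_of_le h, MeasureTheory.integral_Ioc_eq_integral_Ioo]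

lemma slice_upper (a s : ℝ) (ha : 0 ≤ a) (hs : 0 ≤ s) :
    ∫⁻ t in Set.Ioo (a-s) (a+s), ENNReal.ofReal (gpdf t)
      ≤ ∫⁻ t in Set.Ioo (0-s) (0+s), ENNReal.ofReal (gpdf t) := by
  rw [lint_Ioo _ _ (by linarith), lint_Ioo _ _ (by linarith)]
  exact ENNReal.ofReal_le_ofReal (oneD_upper a s ha hs)

lemma slice_lower (a s : ℝ) (ha : 0 ≤ a) (hs : 0 ≤ s) :
    ENNReal.ofReal (Real.exp (-a^2/2)) * ∫⁻ t in Set.Ioo (0-s) (0+s), ENNReal.ofReal (gpdf t)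
      ≤ ∫⁻ t in Set.Ioo (a-s) (a+s), ENNReal.ofReal (gpdf t) := by
  rw [lint_Ioo _ _ (by linarith), lint_Ioo _ _ (by linarith), ← ENNReal.ofReal_mul (by positivity)]
  refine ENNReal.ofReal_le_ofReal ?_
  have := oneD_lower a s ha hs
  have h0 : (0:ℝ) - s = -s := by ring
  have h1 : (0:ℝ) + s = s := by ring
  rw [h0, h1]
  exact this

/-! ### Invariance under linear isometries -/

lemma stdGaussian_isometry {d : ℕ} (e : EuclideanSpace ℝ (Fin d) ≃ₗᵢ[ℝ] EuclideanSpace ℝ (Fin d))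
    (s : Set (EuclideanSpace ℝ (Fin d))) (hs : MeasurableSet s) :
    stdGaussianMeasure d (e ⁻¹' s) = stdGaussianMeasure d s := by
  rw [stdGaussianMeasure, withDensity_apply _ hs,
    withDensity_apply _ (e.continuous.measurable hs)]
  have h1 : ∀ y, ENNReal.ofReal (stdGaussianDensity d y)
      = ENNReal.ofReal (stdGaussianDensity d (e y)) := by
    intro y; unfold stdGaussianDensity; rw [e.norm_map]
  calc ∫⁻ y in e ⁻¹' s, ENNReal.ofReal (stdGaussianDensity d y)
      = ∫⁻ y in e ⁻¹' s, ENNReal.ofReal (stdGaussianDensity d (e y)) := by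
        exact lintegral_congr fun y => h1 y
    _ = ∫⁻ z in s, ENNReal.ofReal (stdGaussianDensity d z) := by
        exact e.measurePreserving.setLIntegral_comp_preimage_emb
          e.toHomeomorph.measurableEmbedding
          (fun z => ENNReal.ofReal (stdGaussianDensity d z)) s

lemma stdGaussian_repr (m : ℕ) (a r : ℝ) (hr : 0 < r) :
    stdGaussianMeasure (m+1) (Metric.ball (EuclideanSpace.single 0 a) r)
      = ∫⁻ z : Fin m → ℝ,
          ENNReal.ofReal ((2*π) ^ (-((m+1 : ℕ) : ℝ)/2) * Real.exp (-(∑ j, (z j)^2)/2))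
            * ∫⁻ t in Set.Ioo (a - Real.sqrt (r^2 - ∑ j, (z j)^2))
                (a + Real.sqrt (r^2 - ∑ j, (z j)^2)), ENNReal.ofReal (gpdf t) := by
  classical
  set c₀ : ℝ := (2*π) ^ (-((m+1 : ℕ) : ℝ)/2) with hc₀def
  have hc₀ : 0 < c₀ := Real.rpow_pos_of_pos (by positivity) _
  set T : Set (ℝ × (Fin m → ℝ)) := {p | (p.1 - a)^2 + ∑ j, (p.2 j)^2 < r^2} with hT
  have hcont1 : Continuous fun p : ℝ × (Fin m → ℝ) => (p.1 - a)^2 + ∑ j, (p.2 j)^2 := by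
    apply Continuous.add
    · continuity
    · exact continuous_finset_sum _ fun j _ => ((continuous_apply j).comp continuous_snd).pow 2
  have hTmeas : MeasurableSet T :=
    measurableSet_lt hcont1.measurable measurable_const
  set G : ℝ × (Fin m → ℝ) → ℝ≥0∞ :=
    fun p => ENNReal.ofReal (c₀ * Real.exp (-(p.1^2 + ∑ j, (p.2 j)^2)/2)) with hGdef
  have hGmeas : Measurable G := by
    apply Measurable.ennreal_ofReal
    apply Continuous.measurable
    apply Continuous.mul continuous_const
    apply Real.continuous_exp.comp
    apply Continuous.div_const
    apply Continuous.neg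
    exact (continuous_fst.pow 2).add
      (continuous_finset_sum _ fun j _ => ((continuous_apply j).comp continuous_snd).pow 2)
  set Φ : EuclideanSpace ℝ (Fin (m+1)) ≃ᵐ ℝ × (Fin m → ℝ) :=
    (MeasurableEquiv.toLp 2 (Fin (m+1) → ℝ)).symm.trans
      (MeasurableEquiv.piFinSuccAbove (fun _ : Fin (m+1) => ℝ) 0) with hΦdef
  have hΦval : ∀ y : EuclideanSpace ℝ (Fin (m+1)),
      Φ y = (y 0, fun j => y (Fin.succAbove 0 j)) := by
    intro y
    simp only [hΦdef, MeasurableEquiv.trans_apply]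
    simp [MeasurableEquiv.piFinSuccAbove, MeasurableEquiv.toLp, Fin.removeNth]
    exact ⟨rfl, rfl⟩
  have hΦmp : MeasurePreserving Φ volume volume :=
    (volume_preserving_piFinSuccAbove (fun _ : Fin (m+1) => ℝ) 0).comp
      (EuclideanSpace.volume_preserving_symm_measurableEquiv_toLp (Fin (m+1)))
  have hnormsq : ∀ y : EuclideanSpace ℝ (Fin (m+1)), ‖y‖^2 = ∑ i, (y i)^2 := by
    intro y; rw [EuclideanSpace.norm_eq, Real.sq_sqrt (by positivity)]; simp [sq_abs]
  have hdens : ∀ y : EuclideanSpace ℝ (Fin (m+1)),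
      ENNReal.ofReal (stdGaussianDensity (m+1) y) = G (Φ y) := by
    intro y
    rw [hΦval]
    unfold stdGaussianDensity
    rw [hnormsq y, Fin.sum_univ_succAbove (fun i => (y i)^2) 0]
  have hball : Metric.ball (EuclideanSpace.single (0 : Fin (m+1)) a) r = Φ ⁻¹' T := by
    ext y
    rw [Metric.mem_ball, EuclideanSpace.dist_eq, Set.mem_preimage, hΦval,
      Real.sqrt_lt' hr]
    simp only [hT, Set.mem_setOf_eq]
    have h0 : EuclideanSpace.single (0 : Fin (m+1)) a 0 = a := by
      simp [EuclideanSpace.single_apply]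
    have hj : ∀ j : Fin m, EuclideanSpace.single (0 : Fin (m+1)) a (Fin.succAbove 0 j) = 0 := by
      intro j
      rw [EuclideanSpace.single_apply, if_neg (Fin.succAbove_ne 0 j)]
    have hsum : ∑ i, dist (y i) (EuclideanSpace.single (0 : Fin (m+1)) a i)^2
        = (y 0 - a)^2 + ∑ j, (y (Fin.succAbove 0 j))^2 := by
      rw [Fin.sum_univ_succAbove
        (fun i => dist (y i) (EuclideanSpace.single (0 : Fin (m+1)) a i)^2) 0]
      congr 1
      · rw [Real.dist_eq, sq_abs, h0]
      · apply Finset.sum_congr rfl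
        intro j _
        rw [hj j, Real.dist_eq, sq_abs, sub_zero]
    rw [hsum]
  rw [stdGaussianMeasure, withDensity_apply _ measurableSet_ball, hball]
  have step1 : ∫⁻ y in Φ ⁻¹' T, ENNReal.ofReal (stdGaussianDensity (m+1) y) ∂volume
      = ∫⁻ p in T, G p ∂volume := by
    rw [lintegral_congr fun y => hdens y]
    exact hΦmp.setLIntegral_comp_preimage_emb Φ.measurableEmbedding G T
  rw [step1]
  rw [← lintegral_indicator hTmeas]
  rw [Measure.volume_eq_prod, MeasureTheory.lintegral_prod_symm _
    (hGmeas.indicator hTmeas).aemeasurable]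
  apply lintegral_congr
  intro z
  set c : ℝ := ∑ j, (z j)^2 with hc
  have hcnn : 0 ≤ c := Finset.sum_nonneg fun j _ => sq_nonneg _
  set s : ℝ := Real.sqrt (r^2 - c) with hs
  have hslice : ∀ t : ℝ, T.indicator G (t, z)
      = (Set.Ioo (a - s) (a + s)).indicator (fun t => G (t, z)) t := by
    intro t
    rw [Set.indicator_apply, Set.indicator_apply]
    congr 1
    simp only [hT, Set.mem_setOf_eq, Set.mem_Ioo, eq_iff_iff]
    have : (t - a)^2 + c < r^2 ↔ |t - a| < s := by
      rw [Real.lt_sqrt (abs_nonneg _), sq_abs]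
      constructor <;> intro h <;> linarith
    rw [this, abs_lt]
    constructor <;> intro h <;> constructor <;> linarith [h.1, h.2]
  calc ∫⁻ t, T.indicator G (t, z) ∂volume
      = ∫⁻ t, (Set.Ioo (a - s) (a + s)).indicator (fun t => G (t, z)) t ∂volume :=
        lintegral_congr hslice
    _ = ∫⁻ t in Set.Ioo (a - s) (a + s), G (t, z) ∂volume :=
        lintegral_indicator measurableSet_Ioo _
    _ = ∫⁻ t in Set.Ioo (a - s) (a + s),
          ENNReal.ofReal (c₀ * Real.exp (-c/2)) * ENNReal.ofReal (gpdf t) ∂volume := by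
        apply lintegral_congr
        intro t
        simp only [hGdef]
        rw [← ENNReal.ofReal_mul (by positivity)]
        congr 1
        unfold gpdf
        rw [mul_assoc, ← Real.exp_add]
        congr 2
        ring
    _ = ENNReal.ofReal (c₀ * Real.exp (-c/2)) * ∫⁻ t in Set.Ioo (a - s) (a + s),
          ENNReal.ofReal (gpdf t) ∂volume :=
        lintegral_const_mul' _ _ ENNReal.ofReal_ne_top


/-! ### Main theorem -/

/-- Gaussian shifted-ball inequality (equation (gaussian_shift)):
`e^{−‖x‖²/2}·γ(B(0,r)) ≤ γ(B(x,r)) ≤ γ(B(0,r))`. -/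
theorem gaussian_shifted_ball (d : ℕ) (hd : 1 ≤ d)
    (x : EuclideanSpace ℝ (Fin d)) (r : ℝ) (hr : 0 < r) :
    ENNReal.ofReal (Real.exp (-‖x‖ ^ 2 / 2)) * stdGaussianMeasure d (Metric.ball 0 r)
        ≤ stdGaussianMeasure d (Metric.ball x r) ∧
      stdGaussianMeasure d (Metric.ball x r) ≤ stdGaussianMeasure d (Metric.ball 0 r) := by
  obtain ⟨m, rfl⟩ : ∃ m, d = m + 1 := ⟨d - 1, by omega⟩
  set a : ℝ := ‖x‖ with hadef
  have ha : 0 ≤ a := norm_nonneg x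
  set v : EuclideanSpace ℝ (Fin (m+1)) := EuclideanSpace.single 0 a with hvdef
  have hnv : ‖v‖ = ‖x‖ := by
    rw [hvdef, EuclideanSpace.norm_single, Real.norm_eq_abs, abs_of_nonneg ha]
  have hx : stdGaussianMeasure (m+1) (Metric.ball x r)
      = stdGaussianMeasure (m+1) (Metric.ball v r) := by
    set e := Submodule.reflection (ℝ ∙ (v - x))ᗮ with hedef
    have he : e v = x := Submodule.reflection_sub hnv
    have hpre : e ⁻¹' (Metric.ball x r) = Metric.ball v r := by
      ext z
      simp only [Set.mem_preimage, Metric.mem_ball]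
      rw [← he, e.dist_map]
    have h := stdGaussian_isometry e (Metric.ball x r) measurableSet_ball
    rw [hpre] at h
    exact h.symm
  have hsz : (EuclideanSpace.single (0 : Fin (m+1)) (0:ℝ)) = 0 := by
    ext i
    simp [EuclideanSpace.single_apply]
  have h0 : Metric.ball (0 : EuclideanSpace ℝ (Fin (m+1))) r
      = Metric.ball (EuclideanSpace.single 0 (0:ℝ)) r := by rw [hsz]
  rw [hx, h0, hvdef, stdGaussian_repr m a r hr, stdGaussian_repr m 0 r hr]
  constructor
  · rw [← lintegral_const_mul' _ _ ENNReal.ofReal_ne_top]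
    apply lintegral_mono
    intro z
    dsimp only
    rw [← mul_assoc, mul_comm (ENNReal.ofReal (Real.exp (-a ^ 2 / 2))) _, mul_assoc]
    exact mul_le_mul_right
      (slice_lower a (Real.sqrt (r^2 - ∑ j, (z j)^2)) ha (Real.sqrt_nonneg _)) _
  · apply lintegral_mono
    intro z
    dsimp only
    exact mul_le_mul_right
      (slice_upper a (Real.sqrt (r^2 - ∑ j, (z j)^2)) ha (Real.sqrt_nonneg _)) _
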